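/- For every integer n > 64 and every positive integer y, one has (n-1)^{y+1} + (n+2)^y ≠ n^{y+1}. -/

import Mathlib

open Finset

private lemma sum_pred_le_prod_sub_one (S : Finset ℕ) (h : ∀ p ∈ S, 1 ≤ p) :
    ∑ p ∈ S, (p - 1) ≤ (∏ p ∈ S, p) - 1 := by
  classical
  induction S using Finset.induction_on with
  | empty => simp
  | insert _ _ ha ih =>
    rename_i a S
    rw [Finset.sum_insert ha, Finset.prod_insert ha]
    have h1 : 1 ≤ a := h a (Finset.mem_insert_self a S)
    have h2 : ∀ p ∈ S, 1 ≤ p := fun p hp => h p (Finset.mem_insert_of_mem hp)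
    have h3 := ih h2
    have hP : 1 ≤ ∏ p ∈ S, p := Finset.one_le_prod' h2
    set P := ∏ p ∈ S, p
    have key : a + P ≤ a * P + 1 := by nlinarith
    omega

/-- key per-prime bound -/
private lemma core_prime (m y p : ℕ) (hm : 64 ≤ m) (hy : 0 < y)
    (heq : m ^ (y + 1) + (m + 3) ^ y = (m + 1) ^ (y + 1))
    (hm2 : m % 2 = 0) (hm3 : m % 3 ≠ 0)
    (hp : p.Prime) (hpM : p ∣ m + 3) :
    p ^ (y * (m + 3).factorization p) < (m + 1) ^ (p - 1) * (y + 1) := by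
  have hp2 : p ≠ 2 := by rintro rfl; obtain ⟨k, hk⟩ := hpM; omega
  have hp3 : p ≠ 3 := by rintro rfl; obtain ⟨k, hk⟩ := hpM; omega
  have hp5 : 5 ≤ p := by
    have h2 := hp.two_le
    by_contra h
    interval_cases p
    · exact hp2 rfl
    · exact hp3 rfl
    · exact absurd hp (by decide)
  have hpodd : Odd p := hp.odd_of_ne_two hp2
  have hpm : ¬ p ∣ m := by
    intro h
    have : p ∣ 3 := by have := Nat.dvd_sub hpM h; simpa using this
    have := Nat.le_of_dvd (by norm_num) this; omega
  have hpm1 : ¬ p ∣ (m + 1) := by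
    intro h
    have : p ∣ 2 := by have := Nat.dvd_sub hpM h; simpa using this
    have := Nat.le_of_dvd (by norm_num) this; omega
  haveI : Fact p.Prime := Fact.mk hp
  have hc1 : Nat.Coprime (m + 1) p := (hp.coprime_iff_not_dvd.mpr hpm1).symm
  have hc0 : Nat.Coprime m p := (hp.coprime_iff_not_dvd.mpr hpm).symm
  set u1 : (ZMod p)ˣ := ZMod.unitOfCoprime (m + 1) hc1 with hu1
  set u0 : (ZMod p)ˣ := ZMod.unitOfCoprime m hc0 with hu0
  -- cast the equation to ZMod p
  have hMz : ((m : ZMod p) + 3) = 0 := by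
    have : (((m + 3 : ℕ)) : ZMod p) = 0 := (ZMod.natCast_eq_zero_iff _ _).mpr hpM
    push_cast at this; exact this
  have hz : ((m : ZMod p) + 1) ^ (y + 1) = (m : ZMod p) ^ (y + 1) := by
    have h0 := congrArg (fun t : ℕ => (t : ZMod p)) heq
    push_cast at h0
    rw [hMz, zero_pow hy.ne'] at h0
    simpa using h0.symm
  have hu : u1 ^ (y + 1) = u0 ^ (y + 1) := by
    apply Units.ext
    push_cast [hu1, hu0, ZMod.coe_unitOfCoprime]
    exact_mod_cast hz
  set t := orderOf (u1 * u0⁻¹) with htdef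
  have ht_dvd : t ∣ y + 1 := by
    apply orderOf_dvd_of_pow_eq_one
    rw [mul_pow, inv_pow, hu, mul_inv_cancel]
  have ht_card : t ∣ p - 1 := by
    have h := orderOf_dvd_card (x := u1 * u0⁻¹)
    rwa [ZMod.card_units] at h
  have ht_pos : 0 < t := orderOf_pos _
  have ht_le : t ≤ p - 1 := Nat.le_of_dvd (by omega) ht_card
  have hut : u1 ^ t = u0 ^ t := by
    have h1 : (u1 * u0⁻¹) ^ t = 1 := pow_orderOf_eq_one _
    rw [mul_pow, inv_pow] at h1
    exact mul_inv_eq_one.mp h1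
  have hle_t : m ^ t ≤ (m + 1) ^ t := Nat.pow_le_pow_left (by omega) t
  have hlt_t : m ^ t < (m + 1) ^ t := Nat.pow_lt_pow_left (by omega) ht_pos.ne'
  have hdvdt : p ∣ (m + 1) ^ t - m ^ t := by
    rw [← ZMod.natCast_eq_zero_iff]
    rw [Nat.cast_sub hle_t]
    have hcoe : ((m + 1 : ℕ) : ZMod p) ^ t = ((m : ℕ) : ZMod p) ^ t := by
      have := congrArg (Units.val) hut
      push_cast [hu1, hu0, ZMod.coe_unitOfCoprime] at this
      exact_mod_cast this
    push_cast
    push_cast at hcoe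
    rw [hcoe]; ring
  obtain ⟨c, hc⟩ := ht_dvd
  have hc0' : c ≠ 0 := by rintro rfl; omega
  have hx : ¬ p ∣ (m + 1) ^ t := fun h => hpm1 (hp.dvd_of_dvd_pow h)
  have LTE := padicValNat.pow_sub_pow (p := p) hpodd (x := (m + 1) ^ t) (y := m ^ t)
      hlt_t hdvdt hx hc0'
  have hyy : ((m + 1) ^ t) ^ c - (m ^ t) ^ c = (m + 3) ^ y := by
    rw [← pow_mul, ← pow_mul, ← hc]
    omega
  rw [hyy] at LTE
  have hval : padicValNat p ((m + 3) ^ y) = y * (m + 3).factorization p := by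
    rw [← Nat.factorization_def _ hp, Nat.factorization_pow]
    simp
  set α := padicValNat p ((m + 1) ^ t - m ^ t) with hα
  set γ := padicValNat p c with hγ
  have hsplit : y * (m + 3).factorization p = α + γ := by rw [← hval, LTE]
  have hb1 : p ^ α ≤ (m + 1) ^ t - m ^ t :=
    Nat.le_of_dvd (by omega) pow_padicValNat_dvd
  have hb2 : p ^ γ ≤ c :=
    Nat.le_of_dvd (Nat.pos_of_ne_zero hc0') pow_padicValNat_dvd
  have hcley : c ≤ y + 1 := by
    calc c ≤ t * c := Nat.le_mul_of_pos_left c ht_pos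
    _ = y + 1 := hc.symm
  have hmt_pos : 0 < m ^ t := pow_pos (by omega) t
  calc p ^ (y * (m + 3).factorization p) = p ^ α * p ^ γ := by rw [hsplit, pow_add]
    _ ≤ ((m + 1) ^ t - m ^ t) * c := Nat.mul_le_mul hb1 hb2
    _ < (m + 1) ^ t * (y + 1) := by
        apply Nat.mul_lt_mul_of_lt_of_le (by omega) hcley (by omega)
    _ ≤ (m + 1) ^ (p - 1) * (y + 1) := by
        exact Nat.mul_le_mul_right _ (Nat.pow_le_pow_right (by omega) ht_le)

theorem stmt_3 (n y : ℕ) (hn : 64 < n) (hy : 0 < y) :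
    (n - 1) ^ (y + 1) + (n + 2) ^ y ≠ n ^ (y + 1) := by
  intro heqn
  obtain ⟨m, rfl⟩ : ∃ m, n = m + 1 := ⟨n - 1, by omega⟩
  have hm : 64 ≤ m := by omega
  have heq : m ^ (y + 1) + (m + 3) ^ y = (m + 1) ^ (y + 1) := by
    have h1 : m + 1 - 1 = m := by omega
    have h2 : m + 1 + 2 = m + 3 := by omega
    rwa [h1, h2] at heqn
  clear heqn hn
  -- step 0 : m even
  have hm2 : m % 2 = 0 := by
    by_contra h
    have h1 : m % 2 = 1 := by omega
    have e1 : m ^ (y + 1) % 2 = 1 := by rw [Nat.pow_mod, h1]; simp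
    have e2 : (m + 3) ^ y % 2 = 0 := by
      rw [Nat.pow_mod]
      have h3 : (m + 3) % 2 = 0 := by omega
      rw [h3, Nat.zero_pow hy]
    have e3 : (m + 1) ^ (y + 1) % 2 = 0 := by
      rw [Nat.pow_mod]
      have h3 : (m + 1) % 2 = 0 := by omega
      rw [h3, Nat.zero_pow (by omega : 0 < y + 1)]
    omega
  -- step 0' : 3 ∤ m
  have hm3 : m % 3 ≠ 0 := by
    intro h1
    have e1 : m ^ (y + 1) % 3 = 0 := by
      rw [Nat.pow_mod, h1, Nat.zero_pow (by omega : 0 < y + 1)]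
    have e2 : (m + 3) ^ y % 3 = 0 := by
      rw [Nat.pow_mod]
      have h3 : (m + 3) % 3 = 0 := by omega
      rw [h3, Nat.zero_pow hy]
    have e3 : (m + 1) ^ (y + 1) % 3 = 1 := by
      rw [Nat.pow_mod]
      have h3 : (m + 1) % 3 = 1 := by omega
      rw [h3]; simp
    omega
  -- L1 : (y+1) * m^y < (m+3)^y
  have key1 : ∀ z : ℕ, 1 ≤ z → m ^ (z + 1) + (z + 1) * m ^ z < (m + 1) ^ (z + 1) := by
    intro z hz
    induction z, hz using Nat.le_induction with
    | base =>
      have h1 : (m + 1) ^ (1 + 1) = m ^ (1 + 1) + 2 * m ^ 1 + 1 := by ring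
      omega
    | succ z hz ih =>
      have hpz : 0 < m ^ z := pow_pos (by omega : 0 < m) z
      have step : (m + 1) * (m ^ (z + 1) + (z + 1) * m ^ z + 1) ≤ (m + 1) * (m + 1) ^ (z + 1) :=
        Nat.mul_le_mul_left _ (by omega)
      have e3 : (m + 1) ^ (z + 1 + 1) = (m + 1) * (m + 1) ^ (z + 1) := by ring
      have e1 : m ^ (z + 1 + 1) = m * m ^ (z + 1) := by ring
      have e2 : m ^ (z + 1) = m * m ^ z := by ring
      rw [e3]
      nlinarith [step, e1, e2, hpz]
  have L1 : (y + 1) * m ^ y < (m + 3) ^ y := by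
    have h := key1 y hy
    linarith [h, heq]
  -- L2 : global multiplicative bound
  have hM0 : m + 3 ≠ 0 := by omega
  set S := (m + 3).primeFactors with hS
  have hSne : S.Nonempty := Nat.nonempty_primeFactors.mpr (by omega)
  set ω := S.card with hω
  have hω1 : 1 ≤ ω := Finset.card_pos.mpr hSne
  have hprime : ∀ p ∈ S, p.Prime := fun p hp => Nat.prime_of_mem_primeFactors hp
  have hdvd : ∀ p ∈ S, p ∣ m + 3 := fun p hp => Nat.dvd_of_mem_primeFactors hp
  have hfact : ∏ p ∈ S, p ^ ((m + 3).factorization p) = m + 3 := by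
    have h := Nat.factorization_prod_pow_eq_self hM0
    rw [Finsupp.prod] at h
    rwa [hS, ← Nat.support_factorization]
  have hMy : (m + 3) ^ y = ∏ p ∈ S, p ^ (y * (m + 3).factorization p) := by
    conv_lhs => rw [← hfact]
    rw [← Finset.prod_pow]
    apply Finset.prod_congr rfl
    intro p _
    rw [← pow_mul, mul_comm]
  have L2 : (m + 3) ^ y < (m + 1) ^ (m + 2) * (y + 1) ^ ω := by
    have hstep : ∏ p ∈ S, p ^ (y * (m + 3).factorization p)
        < ∏ p ∈ S, ((m + 1) ^ (p - 1) * (y + 1)) := by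
      apply Finset.prod_lt_prod_of_nonempty
      · intro p hp
        exact pow_pos (hprime p hp).pos _
      · intro p hp
        exact core_prime m y p hm hy heq hm2 hm3 (hprime p hp) (hdvd p hp)
      · exact hSne
    have hsum : ∑ p ∈ S, (p - 1) ≤ m + 2 := by
      have h1 := sum_pred_le_prod_sub_one S (fun p hp => (hprime p hp).pos)
      have h2 : ∏ p ∈ S, p ≤ m + 3 :=
        Nat.le_of_dvd (by omega) (Nat.prod_primeFactors_dvd (m + 3))
      omega
    calc (m + 3) ^ y = ∏ p ∈ S, p ^ (y * (m + 3).factorization p) := hMy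
      _ < ∏ p ∈ S, ((m + 1) ^ (p - 1) * (y + 1)) := hstep
      _ = (∏ p ∈ S, (m + 1) ^ (p - 1)) * (y + 1) ^ ω := by
          rw [Finset.prod_mul_distrib, Finset.prod_const]
      _ = (m + 1) ^ (∑ p ∈ S, (p - 1)) * (y + 1) ^ ω := by
          rw [Finset.prod_pow_eq_pow_sum]
      _ ≤ (m + 1) ^ (m + 2) * (y + 1) ^ ω := by
          exact Nat.mul_le_mul_right _ (Nat.pow_le_pow_right (by omega) hsum)
  have h5ω : 5 ^ ω ≤ m + 3 := by
    have h5 : ∀ p ∈ S, 5 ≤ p := by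
      intro p hp
      have hpp := hprime p hp
      have hpd := hdvd p hp
      have h2 := hpp.two_le
      by_contra h
      interval_cases p
      · obtain ⟨k, hk⟩ := hpd
        have : (m + 3) % 2 = 1 := by omega
        omega
      · obtain ⟨k, hk⟩ := hpd
        omega
      · exact absurd hpp (by decide)
    calc 5 ^ ω = ∏ _p ∈ S, 5 := by rw [Finset.prod_const]
      _ ≤ ∏ p ∈ S, p := Finset.prod_le_prod (fun _ _ => by norm_num) h5
      _ ≤ m + 3 := Nat.le_of_dvd (by omega) (Nat.prod_primeFactors_dvd (m + 3))
  have hω2 : 2 ^ ω ≤ m + 3 := le_trans (Nat.pow_le_pow_left (by norm_num) ω) h5ω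
  have hωm : ω ≤ m + 2 := by
    have h := Nat.lt_two_pow_self (n := ω)
    omega
  -- L3 : y ≤ m + 4 + 2ω
  have L3 : y ≤ m + 4 + 2 * ω := by
    by_contra hgt
    push_neg at hgt
    obtain ⟨z, hz⟩ : ∃ z, y = m + 5 + 2 * ω + z := ⟨y - (m + 5 + 2 * ω), by omega⟩
    have claim : ∀ w : ℕ, (m + 6 + 2 * ω + w) ^ ω ≤ (m + 3) ^ (3 + 2 * ω + w) := by
      intro w
      induction w with
      | zero =>
        have hbase : m + 6 + 2 * ω ≤ (m + 3) ^ 2 := by nlinarith [hωm]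
        calc (m + 6 + 2 * ω + 0) ^ ω ≤ ((m + 3) ^ 2) ^ ω := by
              exact Nat.pow_le_pow_left (by omega) ω
          _ = (m + 3) ^ (2 * ω) := by rw [← pow_mul]
          _ ≤ (m + 3) ^ (3 + 2 * ω + 0) := Nat.pow_le_pow_right (by omega) (by omega)
      | succ w ih =>
        calc (m + 6 + 2 * ω + (w + 1)) ^ ω ≤ (2 * (m + 6 + 2 * ω + w)) ^ ω := by
              exact Nat.pow_le_pow_left (by omega) ω
          _ = 2 ^ ω * (m + 6 + 2 * ω + w) ^ ω := by rw [mul_pow]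
          _ ≤ 2 ^ ω * (m + 3) ^ (3 + 2 * ω + w) := Nat.mul_le_mul_left _ ih
          _ ≤ (m + 3) * (m + 3) ^ (3 + 2 * ω + w) := Nat.mul_le_mul_right _ hω2
          _ = (m + 3) ^ (3 + 2 * ω + (w + 1)) := by ring
    have hyω : (y + 1) ^ ω ≤ (m + 3) ^ (3 + 2 * ω + z) := by
      have h1 : y + 1 = m + 6 + 2 * ω + z := by omega
      rw [h1]; exact claim z
    have hcontra : (m + 3) ^ y < (m + 3) ^ y := by
      calc (m + 3) ^ y < (m + 1) ^ (m + 2) * (y + 1) ^ ω := L2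
        _ ≤ (m + 3) ^ (m + 2) * (m + 3) ^ (3 + 2 * ω + z) := by
            exact Nat.mul_le_mul (Nat.pow_le_pow_left (by omega) _) hyω
        _ = (m + 3) ^ (m + 2 + (3 + 2 * ω + z)) := (pow_add _ _ _).symm
        _ = (m + 3) ^ y := by congr 1; omega
    exact absurd hcontra (lt_irrefl _)
  -- L4 : contradiction with L1
  have hbase67 : 64 * (m + 3) ≤ 67 * m := by omega
  have hpow67 : ∀ w : ℕ, 64 ^ w * (m + 3) ^ w ≤ 67 ^ w * m ^ w := by
    intro w
    have h := Nat.pow_le_pow_left hbase67 w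
    rwa [mul_pow, mul_pow] at h
  rcases le_or_gt y 10 with h10 | h10
  · -- small range
    have h67 : 67 ^ y ≤ 2 * 64 ^ y := by interval_cases y <;> norm_num
    have hfin : 64 ^ y * (m + 3) ^ y ≤ 64 ^ y * (2 * m ^ y) := by
      calc 64 ^ y * (m + 3) ^ y ≤ 67 ^ y * m ^ y := hpow67 y
        _ ≤ (2 * 64 ^ y) * m ^ y := Nat.mul_le_mul_right _ h67
        _ = 64 ^ y * (2 * m ^ y) := by ring
    have hkey : (m + 3) ^ y ≤ 2 * m ^ y :=
      Nat.le_of_mul_le_mul_left hfin (pow_pos (by norm_num) y)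
    have : (m + 3) ^ y ≤ (y + 1) * m ^ y :=
      hkey.trans (Nat.mul_le_mul_right _ (by omega))
    exact absurd L1 (not_lt.mpr this)
  · rcases le_or_gt y 53 with h53 | h53
    · -- middle range
      have hmono : 67 ^ y * 64 ^ 53 ≤ 67 ^ 53 * 64 ^ y := by
        obtain ⟨d, hd⟩ : ∃ d, 53 = y + d := ⟨53 - y, by omega⟩
        rw [hd, pow_add, pow_add]
        calc 67 ^ y * (64 ^ y * 64 ^ d) ≤ 67 ^ y * (64 ^ y * 67 ^ d) := by
              exact Nat.mul_le_mul_left _ (Nat.mul_le_mul_left _ (Nat.pow_le_pow_left (by norm_num) d))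
          _ = 67 ^ y * 67 ^ d * 64 ^ y := by ring
      have hbig : (67:ℕ) ^ 53 ≤ 12 * 64 ^ 53 := by norm_num
      have h67 : 67 ^ y ≤ 12 * 64 ^ y := by
        have h1 : 67 ^ y * 64 ^ 53 ≤ (12 * 64 ^ y) * 64 ^ 53 := by
          calc 67 ^ y * 64 ^ 53 ≤ 67 ^ 53 * 64 ^ y := hmono
            _ ≤ (12 * 64 ^ 53) * 64 ^ y := Nat.mul_le_mul_right _ hbig
            _ = (12 * 64 ^ y) * 64 ^ 53 := by ring
        exact Nat.le_of_mul_le_mul_right h1 (pow_pos (by norm_num) 53)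
      have hfin : 64 ^ y * (m + 3) ^ y ≤ 64 ^ y * (12 * m ^ y) := by
        calc 64 ^ y * (m + 3) ^ y ≤ 67 ^ y * m ^ y := hpow67 y
          _ ≤ (12 * 64 ^ y) * m ^ y := Nat.mul_le_mul_right _ h67
          _ = 64 ^ y * (12 * m ^ y) := by ring
      have hkey : (m + 3) ^ y ≤ 12 * m ^ y :=
        Nat.le_of_mul_le_mul_left hfin (pow_pos (by norm_num) y)
      have : (m + 3) ^ y ≤ (y + 1) * m ^ y :=
        hkey.trans (Nat.mul_le_mul_right _ (by omega))
      exact absurd L1 (not_lt.mpr this)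
    · -- large range : 54 ≤ y ≤ m + 4 + 2ω, use real exponential bound
      have hω12 : 6 * ω + 12 ≤ m := by
        rcases le_or_gt ω 2 with hω' | hω'
        · omega
        · have key5 : ∀ w : ℕ, 3 ≤ w → 6 * w + 15 ≤ 5 ^ w := by
            intro w hw
            induction w, hw using Nat.le_induction with
            | base => norm_num
            | succ w hw ih =>
              have h1 : 5 ^ (w + 1) = 5 * 5 ^ w := by ring
              omega
          have := key5 ω (by omega)
          omega
      have h3y : 3 * y ≤ 4 * m := by omega
      have hmR : (0:ℝ) < (m:ℝ) := by
        have h0 : (0:ℕ) < m := by omega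
        exact_mod_cast h0
      have hreal : ((m:ℝ) + 3) ^ y ≤ 55 * (m:ℝ) ^ y := by
        have h1 : ((m:ℝ) + 3) = (m:ℝ) * (1 + 3 / (m:ℝ)) := by field_simp
        have h2 : (1 + 3 / (m:ℝ)) ≤ Real.exp (3 / (m:ℝ)) := by
          have h := Real.add_one_le_exp (3 / (m:ℝ))
          linarith
        have h3 : ((m:ℝ) + 3) ^ y ≤ (m:ℝ) ^ y * Real.exp (3 / (m:ℝ)) ^ y := by
          rw [h1, mul_pow]
          apply mul_le_mul_of_nonneg_left _ (by positivity)
          exact pow_le_pow_left₀ (by positivity) h2 y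
        have h4 : Real.exp (3 / (m:ℝ)) ^ y = Real.exp ((y:ℝ) * (3 / (m:ℝ))) := by
          rw [← Real.exp_nat_mul]
        have h5 : (y:ℝ) * (3 / (m:ℝ)) ≤ 4 := by
          have hc : (3:ℝ) * (y:ℝ) ≤ 4 * (m:ℝ) := by exact_mod_cast h3y
          rw [mul_div_assoc', div_le_iff₀ hmR]
          linarith
        have h6 : Real.exp ((y:ℝ) * (3 / (m:ℝ))) ≤ Real.exp 4 := Real.exp_le_exp.mpr h5
        have h7 : Real.exp (4:ℝ) ≤ 55 := by
          have h8 : Real.exp (4:ℝ) = Real.exp 1 ^ (4:ℕ) := by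
            rw [← Real.exp_nat_mul]; norm_num
          have h9 := Real.exp_one_lt_d9
          rw [h8]
          calc Real.exp 1 ^ (4:ℕ) ≤ (2.7182818286:ℝ) ^ (4:ℕ) :=
                pow_le_pow_left₀ (Real.exp_pos 1).le h9.le 4
            _ ≤ 55 := by norm_num
        calc ((m:ℝ) + 3) ^ y ≤ (m:ℝ) ^ y * Real.exp (3 / (m:ℝ)) ^ y := h3
          _ ≤ (m:ℝ) ^ y * 55 := by
              apply mul_le_mul_of_nonneg_left _ (by positivity)
              rw [h4]; exact h6.trans h7
          _ = 55 * (m:ℝ) ^ y := by ring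
      have hnat : (m + 3) ^ y ≤ 55 * m ^ y := by
        have hcoe : ((m:ℝ) + 3) = ((m + 3 : ℕ) : ℝ) := by push_cast; ring
        rw [hcoe] at hreal
        exact_mod_cast hreal
      have hfin2 : (m + 3) ^ y ≤ (y + 1) * m ^ y :=
        hnat.trans (Nat.mul_le_mul_right _ (by omega))
      exact absurd L1 (not_lt.mpr hfin2)
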